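/- Let s > 0, n ≥ 1. Let P_1,…,P_n be i.i.d. Poisson(1) random variables and let (ΔC_1,…,ΔC_n) be a random vector of nonpositive integers whose conditional law given (P_1,…,P_n) = (p_1,…,p_n) with ∑ p_i = n + s is P(ΔC_k = −c_k for all k | P_i = p_i for all i) = (∏_{i=1}^n C(p_i, c_i) 1_{c_i ≤ p_i}) / C(∑ p_i, s) for nonnegative integers c_1,…,c_n summing to s (and 0 otherwise). Then for all nonnegative integers j_1,…,j_n with ∑ j_i = n, P(P_i + ΔC_i = j_i for all i | ∑_{k=1}^n P_k = n + s) = P(P_i = j_i for all i | ∑_{k=1}^n P_k = n). That is, conditionally on S_n = s the corrected vector (P_i + ΔC_i) is distributed as (P_i) conditioned by S_n = 0, where S_n = ∑_{k=1}^n (P_k − 1). -/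

import Mathlib

open MeasureTheory ProbabilityTheory Finset
open scoped ENNReal NNReal Nat

lemma vandermonde_piAntidiag {ι : Type*} [DecidableEq ι] (s : Finset ι) (p : ι → ℕ) :
    ∀ m : ℕ, ∑ c ∈ s.piAntidiag m, ∏ i ∈ s, (p i).choose (c i) = (∑ i ∈ s, p i).choose m := by
  induction s using Finset.cons_induction with
  | empty =>
    intro m
    rw [Finset.piAntidiag_empty]
    rcases Nat.eq_zero_or_pos m with rfl | hm
    · simp
    · rw [if_neg (by omega)]
      simp [Nat.choose_eq_zero_of_lt hm]
  | cons i t hi ih =>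
    intro m
    rw [Finset.piAntidiag_cons hi, Finset.sum_disjiUnion, Finset.sum_cons, Nat.add_choose_eq]
    refine Finset.sum_congr rfl fun ab hab => ?_
    rw [Finset.sum_map]
    have key : ∀ g ∈ t.piAntidiag ab.2,
        ∏ x ∈ cons i t hi,
          (p x).choose ((addRightEmbedding (fun t' => if t' = i then ab.1 else 0)) g x)
          = (p i).choose ab.1 * ∏ x ∈ t, (p x).choose (g x) := by
      intro g hg
      obtain ⟨-, hsupp⟩ := Finset.mem_piAntidiag.mp hg
      have hgi : g i = 0 := by by_contra h; exact hi (hsupp i h)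
      rw [Finset.prod_cons]
      congr 1
      · simp [addRightEmbedding_apply, hgi]
      · refine Finset.prod_congr rfl fun x hx => ?_
        have hxi : x ≠ i := fun h => hi (h ▸ hx)
        simp [addRightEmbedding_apply, hxi]
    rw [Finset.sum_congr rfl key, ← Finset.mul_sum, ih]

lemma sum_prod_inv_factorial {ι : Type*} [DecidableEq ι] (s : Finset ι) (m : ℕ) :
    ∑ c ∈ s.piAntidiag m, ∏ i ∈ s, (((c i)! : ℝ))⁻¹ = (s.card : ℝ) ^ m / m ! := by
  have h1 : ((s.card : ℝ)) ^ m = ∑ c ∈ s.piAntidiag m, (Nat.multinomial s c : ℝ) := by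
    have := Finset.sum_pow_eq_sum_piAntidiag s (fun _ => (1 : ℝ)) m
    simpa using this
  rw [eq_div_iff (by positivity : ((m ! : ℝ)) ≠ 0), Finset.sum_mul, h1]
  refine Finset.sum_congr rfl fun c hc => ?_
  obtain ⟨hsum, -⟩ := Finset.mem_piAntidiag.mp hc
  have spec := Nat.multinomial_spec s c
  rw [hsum] at spec
  have spec' : ((∏ i ∈ s, (c i)! : ℕ) : ℝ) * (Nat.multinomial s c : ℝ) = (m ! : ℝ) := by
    exact_mod_cast congrArg (Nat.cast : ℕ → ℝ) spec
  have hprod : ((∏ i ∈ s, (c i)! : ℕ) : ℝ) ≠ 0 := by positivity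
  push_cast at spec' hprod ⊢
  rw [Finset.prod_inv_distrib, ← spec']
  field_simp

/-- Real-valued summation identity used for the numerator. -/
lemma real_sum_numerator {n : ℕ} (s : ℕ) (j : Fin n → ℕ) (C : ℝ) :
    ∑ c ∈ (Finset.univ : Finset (Fin n)).piAntidiag s,
      (∏ i, Real.exp (-1) / ((j i + c i)! : ℝ)) *
        ((∏ i, (((j i + c i).choose (c i) : ℕ) : ℝ)) / C)
    = Real.exp (-1) ^ n * (∏ i, (((j i)! : ℝ))⁻¹) * ((n : ℝ) ^ s / s !) / C := by
  have key : ∀ c : Fin n → ℕ,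
      (∏ i, Real.exp (-1) / ((j i + c i)! : ℝ)) *
        (∏ i, (((j i + c i).choose (c i) : ℕ) : ℝ))
      = Real.exp (-1) ^ n * (∏ i, (((j i)! : ℝ))⁻¹) * ∏ i, (((c i)! : ℝ))⁻¹ := by
    intro c
    rw [← Finset.prod_mul_distrib]
    have hfac : ∀ i : Fin n,
        Real.exp (-1) / ((j i + c i)! : ℝ) * (((j i + c i).choose (c i) : ℕ) : ℝ)
        = Real.exp (-1) * (((j i)! : ℝ)⁻¹ * ((c i)! : ℝ)⁻¹) := by
      intro i
      rw [Nat.cast_choose ℝ (Nat.le_add_left (c i) (j i))]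
      have h2 : (j i + c i) - c i = j i := by omega
      rw [h2]
      have h3 : ((j i + c i)! : ℝ) ≠ 0 := by positivity
      have h4 : ((j i)! : ℝ) ≠ 0 := by positivity
      have h5 : ((c i)! : ℝ) ≠ 0 := by positivity
      field_simp
    rw [Finset.prod_congr rfl fun i _ => hfac i, Finset.prod_mul_distrib,
      Finset.prod_mul_distrib, Finset.prod_const, Finset.card_univ, Fintype.card_fin]
    ring
  calc ∑ c ∈ (Finset.univ : Finset (Fin n)).piAntidiag s,
      (∏ i, Real.exp (-1) / ((j i + c i)! : ℝ)) *
        ((∏ i, (((j i + c i).choose (c i) : ℕ) : ℝ)) / C)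
      = (∑ c ∈ (Finset.univ : Finset (Fin n)).piAntidiag s,
          Real.exp (-1) ^ n * (∏ i, (((j i)! : ℝ))⁻¹) * ∏ i, (((c i)! : ℝ))⁻¹) / C := by
        rw [Finset.sum_div]
        exact Finset.sum_congr rfl fun c _ => by rw [← mul_div_assoc, key c]
    _ = Real.exp (-1) ^ n * (∏ i, (((j i)! : ℝ))⁻¹) * ((n : ℝ) ^ s / s !) / C := by
        rw [← Finset.mul_sum, sum_prod_inv_factorial, Finset.card_univ, Fintype.card_fin]

/-- **Correction of a Poisson random walk, case `S_n = s > 0`.**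
Let `P 0, …, P (n-1)` be i.i.d. Poisson(1) random variables and let `(ΔC k)` be a random
vector whose conditional law given `(P i) = (p i)` with `∑ p i = n + s` is
`P(∀ k, ΔC k = −c k | ∀ i, P i = p i) = (∏ i, C(p i, c i) 1_{c i ≤ p i}) / C(∑ p i, s)`
for nonnegative integers `c i` summing to `s` (and `0` otherwise; note that
`Nat.choose (p i) (c i) = 0` when `c i > p i`).  Then for all nonnegative integers `j i`
with `∑ j i = n`,
`P(∀ i, P i + ΔC i = j i | ∑ k, P k = n + s) = P(∀ i, P i = j i | ∑ k, P k = n)`,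
i.e. conditionally on `S_n = s` the corrected vector is distributed as `(P i)` conditioned
by `S_n = 0`. -/
theorem corrected_poisson_is_conditioned_poisson
    {Ω : Type*} [MeasureSpace Ω] [IsProbabilityMeasure (ℙ : Measure Ω)]
    (n s : ℕ) (hn : 1 ≤ n) (hs : 0 < s)
    (P : Fin n → Ω → ℕ) (hmeas : ∀ i, Measurable (P i))
    (hindep : iIndepFun P ℙ)
    (hpois : ∀ i, Measure.map (P i) ℙ = poissonMeasure 1)
    (D : Fin n → Ω → ℤ) (hDmeas : ∀ k, Measurable (D k))
    (hD : ∀ p : Fin n → ℕ, ∑ i, p i = n + s → ∀ c : Fin n → ℕ,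
      ℙ[{ω | ∀ k, D k ω = -(c k : ℤ)} | {ω | ∀ i, P i ω = p i}]
        = if ∑ i, c i = s then
            (∏ i, ((p i).choose (c i) : ℝ≥0∞)) / ((∑ i, p i).choose s : ℝ≥0∞)
          else 0)
    (j : Fin n → ℕ) (hj : ∑ i, j i = n) :
    ℙ[{ω | ∀ i, (P i ω : ℤ) + D i ω = (j i : ℤ)} | {ω | ∑ k, P k ω = n + s}]
      = ℙ[{ω | ∀ i, P i ω = j i} | {ω | ∑ k, P k ω = n}] := by
  classical
  -- measurability of the basic events
  have hA_meas : ∀ p : Fin n → ℕ, MeasurableSet {ω | ∀ i, P i ω = p i} := by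
    intro p
    have h1 : {ω | ∀ i, P i ω = p i} = ⋂ i, P i ⁻¹' {p i} := by ext ω; simp
    rw [h1]
    exact MeasurableSet.iInter fun i => (hmeas i) (measurableSet_singleton _)
  have hB_meas : ∀ m : ℕ, MeasurableSet {ω | ∑ k, P k ω = m} := by
    intro m
    have h1 : Measurable fun ω => ∑ k, P k ω :=
      Finset.measurable_sum _ fun i _ => hmeas i
    exact h1 (measurableSet_singleton m)
  have hE_meas : MeasurableSet {ω | ∀ i, (P i ω : ℤ) + D i ω = (j i : ℤ)} := by
    have h1 : {ω | ∀ i, (P i ω : ℤ) + D i ω = (j i : ℤ)}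
        = ⋂ i, (fun ω => (P i ω : ℤ) + D i ω) ⁻¹' {(j i : ℤ)} := by ext ω; simp
    rw [h1]
    exact MeasurableSet.iInter fun i =>
      ((measurable_from_top.comp (hmeas i)).add (hDmeas i)) (measurableSet_singleton _)
  have hEc_meas : ∀ c : Fin n → ℕ, MeasurableSet {ω | ∀ k, D k ω = -(c k : ℤ)} := by
    intro c
    have h1 : {ω | ∀ k, D k ω = -(c k : ℤ)} = ⋂ k, D k ⁻¹' {-(c k : ℤ)} := by ext ω; simp
    rw [h1]
    exact MeasurableSet.iInter fun k => (hDmeas k) (measurableSet_singleton _)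
  -- value of point masses
  have hsingle : ∀ (i : Fin n) (k : ℕ),
      ℙ (P i ⁻¹' {k}) = ENNReal.ofReal (Real.exp (-1) / k !) := by
    intro i k
    rw [← Measure.map_apply (hmeas i) (measurableSet_singleton _), hpois i,
      poissonMeasure_singleton]
    norm_num
  have hA_val : ∀ p : Fin n → ℕ,
      ℙ {ω | ∀ i, P i ω = p i} = ENNReal.ofReal (∏ i, Real.exp (-1) / ((p i)! : ℝ)) := by
    intro p
    have h1 : {ω | ∀ i, P i ω = p i} = ⋂ i, P i ⁻¹' {p i} := by ext ω; simp
    rw [h1, hindep.meas_iInter fun i => ⟨{p i}, measurableSet_singleton _, rfl⟩,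
      ENNReal.ofReal_prod_of_nonneg fun i _ => by positivity]
    exact Finset.prod_congr rfl fun i _ => hsingle i (p i)
  have hA_pos : ∀ p : Fin n → ℕ, 0 < ∏ i, Real.exp (-1) / ((p i)! : ℝ) := by
    intro p
    exact Finset.prod_pos fun i _ => by positivity
  have hAne : ∀ p : Fin n → ℕ,
      ℙ {ω | ∀ i, P i ω = p i} ≠ 0 ∧ ℙ {ω | ∀ i, P i ω = p i} ≠ ∞ := by
    intro p
    rw [hA_val p]
    exact ⟨(ENNReal.ofReal_pos.mpr (hA_pos p)).ne', ENNReal.ofReal_ne_top⟩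
  -- pairwise disjointness of the level sets
  have hA_disj : ∀ m : ℕ,
      (↑((Finset.univ : Finset (Fin n)).piAntidiag m) : Set (Fin n → ℕ)).PairwiseDisjoint
        (fun p => {ω | ∀ i, P i ω = p i}) := by
    intro m p _ q _ hpq
    refine Set.disjoint_left.mpr fun ω hωp hωq => hpq ?_
    funext i
    exact (hωp i).symm.trans (hωq i)
  -- decomposition of the sum-level event
  have hBdecompSet : ∀ m : ℕ, {ω | ∑ k, P k ω = m}
      = ⋃ p ∈ (Finset.univ : Finset (Fin n)).piAntidiag m, {ω | ∀ i, P i ω = p i} := by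
    intro m
    ext ω
    simp only [Set.mem_setOf_eq, Set.mem_iUnion, exists_prop]
    constructor
    · intro h
      exact ⟨fun i => P i ω,
        Finset.mem_piAntidiag.mpr ⟨h, fun i _ => Finset.mem_univ i⟩, fun i => rfl⟩
    · rintro ⟨p, hp, hω⟩
      rw [← (Finset.mem_piAntidiag.mp hp).1]
      exact Finset.sum_congr rfl fun i _ => hω i
  have hBdecomp : ∀ m : ℕ, ℙ {ω | ∑ k, P k ω = m}
      = ∑ p ∈ (Finset.univ : Finset (Fin n)).piAntidiag m, ℙ {ω | ∀ i, P i ω = p i} := by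
    intro m
    rw [hBdecompSet m, measure_biUnion_finset (hA_disj m) fun p _ => hA_meas p]
  have hprod_form : ∀ p : Fin n → ℕ,
      (∏ i, Real.exp (-1) / ((p i)! : ℝ))
        = Real.exp (-1) ^ n * ∏ i, (((p i)! : ℝ))⁻¹ := by
    intro p
    simp [div_eq_mul_inv, Finset.prod_mul_distrib, Finset.card_univ]
  have hBval : ∀ m : ℕ, ℙ {ω | ∑ k, P k ω = m}
      = ENNReal.ofReal (Real.exp (-1) ^ n * ((n : ℝ) ^ m / m !)) := by
    intro m
    rw [hBdecomp m, Finset.sum_congr rfl fun p (_ : p ∈ _) => hA_val p,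
      ← ENNReal.ofReal_sum_of_nonneg fun p _ => le_of_lt (hA_pos p)]
    congr 1
    rw [Finset.sum_congr rfl fun p (_ : p ∈ _) => hprod_form p, ← Finset.mul_sum,
      sum_prod_inv_factorial, Finset.card_univ, Fintype.card_fin]
  -- conditional probabilities decompose products
  have hjoint : ∀ (p : Fin n → ℕ) (T : Set Ω),
      ℙ ({ω | ∀ i, P i ω = p i} ∩ T)
        = ℙ {ω | ∀ i, P i ω = p i} * ℙ[T | {ω | ∀ i, P i ω = p i}] := by
    intro p T
    rw [cond_apply (hA_meas p), ← mul_assoc, ENNReal.mul_inv_cancel (hAne p).1 (hAne p).2,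
      one_mul]
  -- the choose constant
  have hCpos : (0 : ℝ) < ((n + s).choose s : ℝ) :=
    Nat.cast_pos.mpr (Nat.choose_pos (Nat.le_add_left s n))
  have hC0 : (((n + s).choose s : ℕ) : ℝ≥0∞) ≠ 0 := by
    exact_mod_cast (Nat.choose_pos (Nat.le_add_left s n)).ne'
  have hCtop : (((n + s).choose s : ℕ) : ℝ≥0∞) ≠ ∞ := ENNReal.natCast_ne_top _
  -- D-level sets disjointness
  have hEc_disj : ∀ p : Fin n → ℕ,
      (↑((Finset.univ : Finset (Fin n)).piAntidiag s) : Set (Fin n → ℕ)).PairwiseDisjoint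
        (fun c => {ω | ∀ i, P i ω = p i} ∩ {ω | ∀ k, D k ω = -(c k : ℤ)}) := by
    intro p c _ d _ hcd
    refine Set.disjoint_left.mpr fun ω hωc hωd => hcd ?_
    funext k
    have h1 := hωc.2 k
    have h2 := hωd.2 k
    omega
  -- total conditional mass on legal corrections is one
  have hfull : ∀ p : Fin n → ℕ, ∑ i, p i = n + s →
      ℙ ({ω | ∀ i, P i ω = p i} ∩
          ⋃ c ∈ (Finset.univ : Finset (Fin n)).piAntidiag s, {ω | ∀ k, D k ω = -(c k : ℤ)})
        = ℙ {ω | ∀ i, P i ω = p i} := by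
    intro p hp
    rw [Set.inter_iUnion₂,
      measure_biUnion_finset (hEc_disj p) fun c _ => (hA_meas p).inter (hEc_meas c)]
    have hterm : ∀ c ∈ (Finset.univ : Finset (Fin n)).piAntidiag s,
        ℙ ({ω | ∀ i, P i ω = p i} ∩ {ω | ∀ k, D k ω = -(c k : ℤ)})
          = ℙ {ω | ∀ i, P i ω = p i} *
            ((∏ i, ((p i).choose (c i) : ℝ≥0∞)) / (((n + s).choose s : ℕ) : ℝ≥0∞)) := by
      intro c hc
      rw [hjoint p _, hD p hp c, if_pos (Finset.mem_piAntidiag.mp hc).1, hp]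
    rw [Finset.sum_congr rfl hterm, ← Finset.mul_sum]
    have hv : ∑ c ∈ (Finset.univ : Finset (Fin n)).piAntidiag s,
        (∏ i, ((p i).choose (c i) : ℝ≥0∞)) / (((n + s).choose s : ℕ) : ℝ≥0∞)
        = 1 := by
      simp_rw [div_eq_mul_inv, ← Finset.sum_mul]
      have hv2 : ∑ c ∈ (Finset.univ : Finset (Fin n)).piAntidiag s,
          ∏ i, ((p i).choose (c i) : ℝ≥0∞) = (((n + s).choose s : ℕ) : ℝ≥0∞) := by
        have h3 := vandermonde_piAntidiag (Finset.univ : Finset (Fin n)) p s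
        rw [hp] at h3
        rw [← h3]
        push_cast
        rfl
      rw [hv2, ENNReal.mul_inv_cancel hC0 hCtop]
    rw [hv, mul_one]
  -- the zero case
  have hzero : ∀ p : Fin n → ℕ, ∑ i, p i = n + s → (∃ i0, p i0 < j i0) →
      ℙ ({ω | ∀ i, P i ω = p i} ∩ {ω | ∀ i, (P i ω : ℤ) + D i ω = (j i : ℤ)}) = 0 := by
    rintro p hp ⟨i0, hi0⟩
    have hUmeas : MeasurableSet (⋃ c ∈ (Finset.univ : Finset (Fin n)).piAntidiag s,
        {ω | ∀ k, D k ω = -(c k : ℤ)}) :=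
      Finset.measurableSet_biUnion _ fun c _ => hEc_meas c
    have hsplit := measure_inter_add_diff (μ := ℙ) {ω | ∀ i, P i ω = p i} hUmeas
    rw [hfull p hp] at hsplit
    have hdiff : ℙ ({ω | ∀ i, P i ω = p i} \
        ⋃ c ∈ (Finset.univ : Finset (Fin n)).piAntidiag s,
          {ω | ∀ k, D k ω = -(c k : ℤ)}) = 0 := by
      have h0 : ℙ {ω | ∀ i, P i ω = p i} +
          ℙ ({ω | ∀ i, P i ω = p i} \
            ⋃ c ∈ (Finset.univ : Finset (Fin n)).piAntidiag s,
              {ω | ∀ k, D k ω = -(c k : ℤ)})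
          = ℙ {ω | ∀ i, P i ω = p i} + 0 := by rw [add_zero]; exact hsplit
      exact (ENNReal.add_right_inj (hAne p).2).mp h0
    refine measure_mono_null ?_ hdiff
    rintro ω ⟨hωA, hωE⟩
    refine ⟨hωA, ?_⟩
    intro hmem
    simp only [Set.mem_iUnion, exists_prop] at hmem
    obtain ⟨c, -, hc⟩ := hmem
    have h1 := hωE i0
    rw [hωA i0] at h1
    have h2 := hc i0
    omega
  -- the main case
  have hcase : ∀ p ∈ (Finset.univ : Finset (Fin n)).piAntidiag (n + s),
      ℙ ({ω | ∀ i, P i ω = p i} ∩ {ω | ∀ i, (P i ω : ℤ) + D i ω = (j i : ℤ)})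
      = if ∀ i, j i ≤ p i then
          ENNReal.ofReal ((∏ i, Real.exp (-1) / ((p i)! : ℝ)) *
            ((∏ i, (((p i).choose (p i - j i) : ℕ) : ℝ)) / ((n + s).choose s : ℝ)))
        else 0 := by
    intro p hp
    have hpsum := (Finset.mem_piAntidiag.mp hp).1
    by_cases hpj : ∀ i, j i ≤ p i
    · rw [if_pos hpj]
      have hEq : {ω | ∀ i, P i ω = p i} ∩ {ω | ∀ i, (P i ω : ℤ) + D i ω = (j i : ℤ)}
          = {ω | ∀ i, P i ω = p i} ∩ {ω | ∀ k, D k ω = -(((p k - j k : ℕ)) : ℤ)} := by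
        ext ω
        simp only [Set.mem_inter_iff, Set.mem_setOf_eq]
        constructor
        · rintro ⟨hA, hE⟩
          refine ⟨hA, fun k => ?_⟩
          have h1 := hE k
          rw [hA k] at h1
          have h2 := hpj k
          omega
        · rintro ⟨hA, hE⟩
          refine ⟨hA, fun k => ?_⟩
          have h1 := hE k
          rw [hA k]
          have h2 := hpj k
          omega
      have hcsum : ∑ i, (p i - j i) = s := by
        rw [Finset.sum_tsub_distrib _ fun i _ => hpj i, hj, hpsum]
        omega
      rw [hEq, hjoint p _, hD p hpsum (fun k => p k - j k), if_pos hcsum, hpsum, hA_val p,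
        ENNReal.ofReal_mul (le_of_lt (hA_pos p)), ENNReal.ofReal_div_of_pos hCpos]
      congr 1
      congr 1
      · rw [ENNReal.ofReal_prod_of_nonneg fun i _ => by positivity]
        exact Finset.prod_congr rfl fun i _ => (ENNReal.ofReal_natCast _).symm
      · exact (ENNReal.ofReal_natCast _).symm
    · rw [if_neg hpj]
      push_neg at hpj
      exact hzero p hpsum hpj
  -- numerator of the left-hand side
  have hnum1 : ℙ ({ω | ∑ k, P k ω = n + s} ∩ {ω | ∀ i, (P i ω : ℤ) + D i ω = (j i : ℤ)})
      = ENNReal.ofReal (Real.exp (-1) ^ n * (∏ i, (((j i)! : ℝ))⁻¹) *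
          ((n : ℝ) ^ s / s !) / ((n + s).choose s : ℝ)) := by
    rw [hBdecompSet (n + s), Set.iUnion₂_inter,
      measure_biUnion_finset
        (fun p hp q hq hpq => Set.disjoint_of_subset Set.inter_subset_left
          Set.inter_subset_left (hA_disj (n + s) hp hq hpq))
        (fun p _ => (hA_meas p).inter hE_meas),
      Finset.sum_congr rfl hcase, ← Finset.sum_filter]
    have hswap :
        ∑ p ∈ ((Finset.univ : Finset (Fin n)).piAntidiag (n + s)).filter
            (fun p => ∀ i, j i ≤ p i),
          ENNReal.ofReal ((∏ i, Real.exp (-1) / ((p i)! : ℝ)) *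
            ((∏ i, (((p i).choose (p i - j i) : ℕ) : ℝ)) / ((n + s).choose s : ℝ)))
        = ∑ c ∈ (Finset.univ : Finset (Fin n)).piAntidiag s,
          ENNReal.ofReal ((∏ i, Real.exp (-1) / ((j i + c i)! : ℝ)) *
            ((∏ i, (((j i + c i).choose (c i) : ℕ) : ℝ)) / ((n + s).choose s : ℝ))) := by
      refine Finset.sum_nbij' (fun p => fun i => p i - j i) (fun c => fun i => j i + c i)
        ?_ ?_ ?_ ?_ ?_
      · intro p hp
        rw [Finset.mem_filter, Finset.mem_piAntidiag] at hp
        obtain ⟨⟨hpsum, -⟩, hpj⟩ := hp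
        rw [Finset.mem_piAntidiag]
        constructor
        · rw [Finset.sum_tsub_distrib _ fun i _ => hpj i, hpsum, hj]
          omega
        · exact fun i _ => Finset.mem_univ i
      · intro c hc
        rw [Finset.mem_piAntidiag] at hc
        rw [Finset.mem_filter, Finset.mem_piAntidiag]
        refine ⟨⟨?_, fun i _ => Finset.mem_univ i⟩, fun i => Nat.le_add_right _ _⟩
        rw [Finset.sum_add_distrib, hj, hc.1]
      · intro p hp
        rw [Finset.mem_filter] at hp
        funext i
        have := hp.2 i
        simp only []
        omega
      · intro c hc
        funext i
        simp only []
        omega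
      · intro p hp
        rw [Finset.mem_filter] at hp
        have hfun : ∀ i : Fin n, j i + (p i - j i) = p i := fun i => by
          have := hp.2 i; omega
        simp only [hfun]
    rw [hswap, ← ENNReal.ofReal_sum_of_nonneg fun c _ => by positivity]
    congr 1
    exact real_sum_numerator s j _
  -- value of the right numerator
  have hnum2 : ℙ ({ω | ∑ k, P k ω = n} ∩ {ω | ∀ i, P i ω = j i})
      = ENNReal.ofReal (Real.exp (-1) ^ n * ∏ i, (((j i)! : ℝ))⁻¹) := by
    have hsub : {ω | ∑ k, P k ω = n} ∩ {ω | ∀ i, P i ω = j i} = {ω | ∀ i, P i ω = j i} := by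
      apply Set.inter_eq_self_of_subset_right
      intro ω hω
      simp only [Set.mem_setOf_eq] at hω ⊢
      calc ∑ k, P k ω = ∑ i, j i := Finset.sum_congr rfl fun i _ => hω i
        _ = n := hj
    rw [hsub, hA_val j, hprod_form j]
  -- put everything together
  rw [cond_apply (hB_meas (n + s)), cond_apply (hB_meas n), hnum1, hnum2, hBval (n + s),
    hBval n]
  rw [← ENNReal.div_eq_inv_mul, ← ENNReal.div_eq_inv_mul,
    ← ENNReal.ofReal_div_of_pos (by positivity), ← ENNReal.ofReal_div_of_pos (by positivity)]
  congr 1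
  have hC : ((n + s).choose s : ℝ) = (n + s)! / (s ! * n !) := by
    rw [Nat.cast_choose ℝ (Nat.le_add_left s n), Nat.add_sub_cancel]
  have hX : (0 : ℝ) < ∏ i, (((j i)! : ℝ))⁻¹ := by positivity
  have hN : (0 : ℝ) < (n : ℝ) := by positivity
  have hE : (0 : ℝ) < Real.exp (-1) ^ n := by positivity
  rw [hC]
  have hfact : ∀ m : ℕ, ((m ! : ℝ)) ≠ 0 := fun m => by positivity
  field_simp
  ring
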